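/- For bounded positive operators A, B on a Hilbert space, the parallel sum A : B (defined for invertible A, B as (A⁻¹ + B⁻¹)⁻¹, and in general as the strong limit of (A+εI) : (B+εI) as ε ↓ 0) satisfies the variational formula ⟨(A : B)z, z⟩ = inf { ⟨Ax, x⟩ + ⟨By, y⟩ : z = x + y } for every vector z. -/

import Mathlib

open Filter Topology

set_option linter.unusedSectionVars false

section ParallelSumAux

open ContinuousLinearMap

variable {H : Type*} [NormedAddCommGroup H] [InnerProductSpace ℂ H] [CompleteSpace H]

lemma psv_coercive_isUnit (T : H →L[ℂ] H) {c : ℝ} (hc : 0 < c)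
    (h : ∀ x, c * ‖x‖ ^ 2 ≤ (inner ℂ (T x) x : ℂ).re) : IsUnit T := by
  refine isUnit_of_forall_le_norm_inner_map T (c := ⟨c, hc.le⟩) hc fun x => ?_
  calc ‖x‖ ^ 2 * (⟨c, hc.le⟩ : NNReal) = c * ‖x‖ ^ 2 := by
        simp [mul_comm]
    _ ≤ (inner ℂ (T x) x : ℂ).re := h x
    _ ≤ ‖(inner ℂ (T x) x : ℂ)‖ := Complex.re_le_norm _

lemma psv_inverse_coercive (T : H →L[ℂ] H) {c : ℝ} (hc : 0 < c)
    (h : ∀ x, c * ‖x‖ ^ 2 ≤ (inner ℂ (T x) x : ℂ).re) :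
    ∀ x, c / (‖T‖ + 1) ^ 2 * ‖x‖ ^ 2 ≤ (inner ℂ ((Ring.inverse T) x) x : ℂ).re := by
  intro x
  have hu := psv_coercive_isUnit T hc h
  set u := (Ring.inverse T) x with hu_def
  have hTu : T u = x := by
    have := congrArg (fun f : H →L[ℂ] H => f x) (Ring.mul_inverse_cancel T hu)
    simpa [ContinuousLinearMap.mul_apply] using this
  have h1 : (inner ℂ u x : ℂ).re = (inner ℂ (T u) u : ℂ).re := by
    conv_lhs => rw [← hTu]
    rw [← inner_conj_symm, Complex.conj_re]
  have hnorm : ‖x‖ ≤ (‖T‖ + 1) * ‖u‖ := by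
    calc ‖x‖ = ‖T u‖ := by rw [hTu]
      _ ≤ ‖T‖ * ‖u‖ := T.le_opNorm u
      _ ≤ (‖T‖ + 1) * ‖u‖ := by nlinarith [norm_nonneg u]
  have hpos : (0:ℝ) < ‖T‖ + 1 := by positivity
  have hsq : ‖x‖ ^ 2 ≤ (‖T‖ + 1) ^ 2 * ‖u‖ ^ 2 := by nlinarith [norm_nonneg x, norm_nonneg u]
  calc c / (‖T‖ + 1) ^ 2 * ‖x‖ ^ 2 ≤ c / (‖T‖ + 1) ^ 2 * ((‖T‖ + 1) ^ 2 * ‖u‖ ^ 2) := by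
        apply mul_le_mul_of_nonneg_left hsq; positivity
    _ = c * ‖u‖ ^ 2 := by field_simp
    _ ≤ (inner ℂ (T u) u : ℂ).re := h u
    _ = (inner ℂ ((Ring.inverse T) x) x : ℂ).re := h1.symm

lemma psv_expand (T : H →L[ℂ] H) (hT : IsSelfAdjoint T) (a u : H) :
    (inner ℂ (T (a + u)) (a + u) : ℂ).re =
      (inner ℂ (T a) a : ℂ).re + 2 * (inner ℂ (T a) u : ℂ).re + (inner ℂ (T u) u : ℂ).re := by
  have hcross : (inner ℂ (T u) a : ℂ).re = (inner ℂ (T a) u : ℂ).re := by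
    have h1 : (inner ℂ (T u) a : ℂ) = (inner ℂ u (T a) : ℂ) := by
      conv_lhs => rw [← hT.adjoint_eq]
      exact ContinuousLinearMap.adjoint_inner_left T a u
    have h2 : (inner ℂ u (T a) : ℂ) = starRingEnd ℂ (inner ℂ (T a) u : ℂ) := by
      rw [inner_conj_symm]
    rw [h1, h2, Complex.conj_re]
  rw [map_add, inner_add_left, inner_add_right, inner_add_right]
  simp only [Complex.add_re]
  linarith [hcross]

lemma psv_key (T S : H →L[ℂ] H) (hT : IsSelfAdjoint T) (hS : IsSelfAdjoint S)
    {c : ℝ} (hc : 0 < c)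
    (hTc : ∀ x, c * ‖x‖ ^ 2 ≤ (inner ℂ (T x) x : ℂ).re)
    (hSc : ∀ x, c * ‖x‖ ^ 2 ≤ (inner ℂ (S x) x : ℂ).re) (z : H) :
    (∃ x y : H, z = x + y ∧
        (inner ℂ ((Ring.inverse (Ring.inverse T + Ring.inverse S)) z) z : ℂ).re =
          (inner ℂ (T x) x : ℂ).re + (inner ℂ (S y) y : ℂ).re) ∧
    (∀ x y : H, z = x + y →
        (inner ℂ ((Ring.inverse (Ring.inverse T + Ring.inverse S)) z) z : ℂ).re ≤
          (inner ℂ (T x) x : ℂ).re + (inner ℂ (S y) y : ℂ).re) := by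
  have hTu := psv_coercive_isUnit T hc hTc
  have hSu := psv_coercive_isUnit S hc hSc
  set Ti := Ring.inverse T with hTi_def
  set Si := Ring.inverse S with hSi_def
  have hTic := psv_inverse_coercive T hc hTc
  have hSic := psv_inverse_coercive S hc hSc
  have hcT' : (0:ℝ) < c / (‖T‖ + 1) ^ 2 := by positivity
  have hUc : ∀ x, c / (‖T‖ + 1) ^ 2 * ‖x‖ ^ 2 ≤ (inner ℂ ((Ti + Si) x) x : ℂ).re := by
    intro x
    have h1' : c / (‖T‖ + 1) ^ 2 * ‖x‖ ^ 2 ≤ (inner ℂ (Ti x) x : ℂ).re := hTic x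
    have h2 : (0:ℝ) ≤ (inner ℂ (Si x) x : ℂ).re := le_trans (by positivity) (hSic x)
    have : (inner ℂ ((Ti + Si) x) x : ℂ) = inner ℂ (Ti x) x + inner ℂ (Si x) x := by
      rw [ContinuousLinearMap.add_apply, inner_add_left]
    rw [this, Complex.add_re]
    linarith
  have hUu := psv_coercive_isUnit (Ti + Si) hcT' hUc
  set Q := Ring.inverse (Ti + Si) with hQ_def
  set w := Q z with hw_def
  have hwz : (Ti + Si) w = z := by
    have := congrArg (fun f : H →L[ℂ] H => f z) (Ring.mul_inverse_cancel (Ti + Si) hUu)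
    simpa [ContinuousLinearMap.mul_apply] using this
  set x₀ := Ti w with hx0_def
  set y₀ := Si w with hy0_def
  have hsum : x₀ + y₀ = z := by
    rw [← hwz, ContinuousLinearMap.add_apply]
  have hTx0 : T x₀ = w := by
    have := congrArg (fun f : H →L[ℂ] H => f w) (Ring.mul_inverse_cancel T hTu)
    simpa [ContinuousLinearMap.mul_apply] using this
  have hSy0 : S y₀ = w := by
    have := congrArg (fun f : H →L[ℂ] H => f w) (Ring.mul_inverse_cancel S hSu)
    simpa [ContinuousLinearMap.mul_apply] using this
  have hbase : (inner ℂ (T x₀) x₀ : ℂ).re + (inner ℂ (S y₀) y₀ : ℂ).re = (inner ℂ (Q z) z : ℂ).re := by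
    rw [hTx0, hSy0]
    have : (inner ℂ w x₀ : ℂ) + inner ℂ w y₀ = inner ℂ w z := by
      rw [← inner_add_right, hsum]
    calc (inner ℂ w x₀ : ℂ).re + (inner ℂ w y₀ : ℂ).re = ((inner ℂ w x₀ : ℂ) + inner ℂ w y₀).re := by
          rw [Complex.add_re]
      _ = (inner ℂ w z : ℂ).re := by rw [this]
      _ = (inner ℂ (Q z) z : ℂ).re := rfl
  constructor
  · exact ⟨x₀, y₀, hsum.symm, hbase.symm⟩
  · intro x y hxy
    set u := x - x₀ with hu_def
    have hx : x = x₀ + u := by rw [hu_def]; abel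
    have hy : y = y₀ + (-u) := by
      have : x + y = x₀ + y₀ := by rw [← hxy, hsum]
      rw [hu_def]; rw [eq_comm] at this
      have := congrArg (fun t => t - x) this
      rw [show y₀ + -(x - x₀) = x₀ + y₀ - x by abel]
      rw [this]; abel
    have hTnn : (0:ℝ) ≤ (inner ℂ (T u) u : ℂ).re := by
      have := hTc u; nlinarith [sq_nonneg ‖u‖]
    have hSnn : (0:ℝ) ≤ (inner ℂ (S u) u : ℂ).re := by
      have := hSc u; nlinarith [sq_nonneg ‖u‖]
    have eT : (inner ℂ (T x) x : ℂ).re =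
        (inner ℂ (T x₀) x₀ : ℂ).re + 2 * (inner ℂ w u : ℂ).re + (inner ℂ (T u) u : ℂ).re := by
      rw [hx, psv_expand T hT x₀ u, hTx0]
    have eS : (inner ℂ (S y) y : ℂ).re =
        (inner ℂ (S y₀) y₀ : ℂ).re - 2 * (inner ℂ w u : ℂ).re + (inner ℂ (S u) u : ℂ).re := by
      rw [hy, psv_expand S hS y₀ (-u), hSy0]
      have h1 : (inner ℂ (w : H) (-u) : ℂ).re = -(inner ℂ w u : ℂ).re := by
        rw [inner_neg_right, Complex.neg_re]
      have h2 : (inner ℂ (S (-u)) (-u) : ℂ).re = (inner ℂ (S u) u : ℂ).re := by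
        rw [map_neg, inner_neg_neg]
      rw [h1, h2]; ring
    rw [eT, eS, ← hbase]
    linarith

lemma psv_shift (A : H →L[ℂ] H) (ε : ℝ) (x : H) :
    (inner ℂ ((A + ε • 1) x) x : ℂ).re = (inner ℂ (A x) x : ℂ).re + ε * ‖x‖ ^ 2 := by
  have h1 : (A + ε • 1) x = A x + (ε : ℂ) • x := by
    rw [ContinuousLinearMap.add_apply, ContinuousLinearMap.smul_apply,
      ContinuousLinearMap.one_apply, RCLike.real_smul_eq_coe_smul (K := ℂ)]
    norm_num
  rw [h1, inner_add_left, Complex.add_re, inner_smul_left]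
  congr 1
  rw [Complex.conj_ofReal]
  have h3 : ((ε:ℂ) * (inner ℂ x x : ℂ)).re = ε * (inner ℂ x x : ℂ).re := by
    simp [Complex.mul_re]
  rw [h3]
  congr 1
  have := inner_self_eq_norm_sq (𝕜 := ℂ) x
  simpa using this

lemma psv_shift_sa (A : H →L[ℂ] H) (hA : IsSelfAdjoint A) (ε : ℝ) :
    IsSelfAdjoint (A + ε • 1) :=
  hA.add (IsSelfAdjoint.smul (star_trivial ε) (IsSelfAdjoint.one _))

lemma psv_shift_coercive (A : H →L[ℂ] H) (hA : A.IsPositive) (ε : ℝ) (x : H) :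
    ε * ‖x‖ ^ 2 ≤ (inner ℂ ((A + ε • 1) x) x : ℂ).re := by
  rw [psv_shift]
  have h0 : (0:ℝ) ≤ (inner ℂ (A x) x : ℂ).re := by
    have := hA.2 x
    simpa [ContinuousLinearMap.reApplyInnerSelf] using this
  linarith

end ParallelSumAux

/-- for bounded positive operators `A, B` on a complex Hilbert space, the
parallel sum `A : B` (the strong limit of `((A+εI)⁻¹ + (B+εI)⁻¹)⁻¹` as `ε ↓ 0`) satisfies
the variational formula `⟨(A:B)z, z⟩ = inf { ⟨Ax,x⟩ + ⟨By,y⟩ : z = x + y }`. -/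
theorem parallel_sum_variational {H : Type*} [NormedAddCommGroup H]
    [InnerProductSpace ℂ H] [CompleteSpace H]
    (A B P : H →L[ℂ] H) (hA : A.IsPositive) (hB : B.IsPositive)
    (hP : ∀ z : H, Tendsto (fun ε : ℝ =>
        (Ring.inverse (Ring.inverse (A + ε • 1) + Ring.inverse (B + ε • 1))) z)
      (𝓝[>] (0 : ℝ)) (𝓝 (P z)))
    (z : H) :
    (inner ℂ (P z) z : ℂ).re =
      sInf { r : ℝ | ∃ x y : H, z = x + y ∧
        r = (inner ℂ (A x) x : ℂ).re + (inner ℂ (B y) y : ℂ).re } := by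
  set g : ℝ → ℝ := fun ε =>
    (inner ℂ ((Ring.inverse (Ring.inverse (A + ε • 1) + Ring.inverse (B + ε • 1))) z) z : ℂ).re
    with hg_def
  have htend : Tendsto g (𝓝[>] (0:ℝ)) (𝓝 ((inner ℂ (P z) z : ℂ).re)) := by
    have h1 := Filter.Tendsto.inner (𝕜 := ℂ) (hP z) (tendsto_const_nhds (x := z))
    exact (Complex.continuous_re.tendsto _).comp h1
  have hkey : ∀ ε : ℝ, 0 < ε →
      (∃ x y : H, z = x + y ∧ g ε = (inner ℂ ((A + ε • 1) x) x : ℂ).re +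
          (inner ℂ ((B + ε • 1) y) y : ℂ).re) ∧
      (∀ x y : H, z = x + y → g ε ≤ (inner ℂ ((A + ε • 1) x) x : ℂ).re +
          (inner ℂ ((B + ε • 1) y) y : ℂ).re) := by
    intro ε hε
    exact psv_key (A + ε • 1) (B + ε • 1) (psv_shift_sa A hA.isSelfAdjoint ε) (psv_shift_sa B hB.isSelfAdjoint ε)
      hε (psv_shift_coercive A hA ε) (psv_shift_coercive B hB ε) z
  set Sset := { r : ℝ | ∃ x y : H, z = x + y ∧
      r = (inner ℂ (A x) x : ℂ).re + (inner ℂ (B y) y : ℂ).re } with hSset_def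
  have hne : Sset.Nonempty := by
    refine ⟨(inner ℂ (A z) z : ℂ).re + (inner ℂ (B 0) 0 : ℂ).re, z, 0, by simp, rfl⟩
  have hlow : ∀ r ∈ Sset, (inner ℂ (P z) z : ℂ).re ≤ r := by
    rintro r ⟨x, y, hz, rfl⟩
    have hub : ∀ ε : ℝ, 0 < ε → g ε ≤
        (inner ℂ (A x) x : ℂ).re + (inner ℂ (B y) y : ℂ).re + ε * (‖x‖ ^ 2 + ‖y‖ ^ 2) := by
      intro ε hε
      have := (hkey ε hε).2 x y hz
      rw [psv_shift, psv_shift] at this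
      linarith
    have h2 : Tendsto (fun ε : ℝ => (inner ℂ (A x) x : ℂ).re + (inner ℂ (B y) y : ℂ).re
        + ε * (‖x‖ ^ 2 + ‖y‖ ^ 2)) (𝓝[>] (0:ℝ))
        (𝓝 ((inner ℂ (A x) x : ℂ).re + (inner ℂ (B y) y : ℂ).re)) := by
      have : Tendsto (fun ε : ℝ => (inner ℂ (A x) x : ℂ).re + (inner ℂ (B y) y : ℂ).re
          + ε * (‖x‖ ^ 2 + ‖y‖ ^ 2)) (𝓝 (0:ℝ))
          (𝓝 ((inner ℂ (A x) x : ℂ).re + (inner ℂ (B y) y : ℂ).re + 0 * (‖x‖ ^ 2 + ‖y‖ ^ 2))) := by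
        exact (tendsto_const_nhds.add (tendsto_id.mul tendsto_const_nhds))
      simpa using this.mono_left nhdsWithin_le_nhds
    refine le_of_tendsto_of_tendsto htend h2 ?_
    filter_upwards [self_mem_nhdsWithin] with ε hε
    exact hub ε hε
  have hbdd : BddBelow Sset := ⟨(inner ℂ (P z) z : ℂ).re, hlow⟩
  refine le_antisymm (le_csInf hne hlow) ?_
  refine ge_of_tendsto htend ?_
  filter_upwards [self_mem_nhdsWithin] with ε hε
  have hε' : (0:ℝ) < ε := hε
  obtain ⟨x, y, hz, heq⟩ := (hkey ε hε').1
  have hx2 : (0:ℝ) ≤ ε * ‖x‖ ^ 2 := by positivity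
  have hy2 : (0:ℝ) ≤ ε * ‖y‖ ^ 2 := by positivity
  have hmem : (inner ℂ (A x) x : ℂ).re + (inner ℂ (B y) y : ℂ).re ∈ Sset := ⟨x, y, hz, rfl⟩
  have : (inner ℂ (A x) x : ℂ).re + (inner ℂ (B y) y : ℂ).re ≤ g ε := by
    rw [heq, psv_shift, psv_shift]
    linarith
  exact le_trans (csInf_le hbdd hmem) this
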